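/- Let α ∈ ℝ, let σ ∈ ℝ with σ ≠ 0 and σ ≠ 1, let β ∈ (0,1), let K > 0 and C ∈ ℝ, and let q > 0 satisfy |ασq| < 1. Then the function u defined by u(q) = (Kσ/(σ−1))·(1+ασq)^{β−1/σ}·q^{1−β}·[1 + ((β−1/σ)/(1−β))·∑_{n=0}^∞ ((1−1/σ)_n (1)_n/(2−β)_n)·(−ασq)^n/n!] + C is differentiable at q with derivative u′(q) = K·(1+ασq)^{β−1/σ}·q^{−β}. -/

import Mathlib

open Filter

namespace LFRRA

noncomputable def dd (b c : ℝ) (n : ℕ) : ℝ :=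
  (ascPochhammer ℝ n).eval b / (ascPochhammer ℝ n).eval c

lemma poch_pos {c : ℝ} (hc : 0 < c) (n : ℕ) : 0 < (ascPochhammer ℝ n).eval c :=
  ascPochhammer_pos n c hc

lemma dd_succ (b : ℝ) {c : ℝ} (hc : 0 < c) (n : ℕ) :
    dd b c (n + 1) * (c + n) = dd b c n * (b + n) := by
  have h1 := poch_pos hc n
  have h2 := poch_pos hc (n + 1)
  unfold dd
  rw [ascPochhammer_succ_eval, ascPochhammer_succ_eval]
  field_simp

lemma dd_zero (b c : ℝ) : dd b c 0 = 1 := by simp [dd]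

/-- master summability: ∑ (n+1)·|d n|·w^n < ∞ for 0 ≤ w < 1. -/
lemma summable_master (b : ℝ) {c : ℝ} (hc : 1 < c) {w : ℝ} (hw0 : 0 ≤ w) (hw : w < 1) :
    Summable (fun n : ℕ => ((n : ℝ) + 1) * |dd b c n| * w ^ n) := by
  set r : ℝ := (1 + w) / 2 with hr
  have hr1 : r < 1 := by rw [hr]; linarith
  have hwr : w < r := by rw [hr]; linarith
  have hr0 : 0 < r := by rw [hr]; linarith
  apply summable_of_ratio_norm_eventually_le hr1
  rw [eventually_atTop]
  refine ⟨Nat.ceil ((3 * |b| + 2) / (r - w)) + 1, fun n hn => ?_⟩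
  have hn1 : (1 : ℕ) ≤ n := le_trans (Nat.le_add_left 1 _) hn
  have hnb : (3 * |b| + 2) / (r - w) ≤ (n : ℝ) := by
    calc (3 * |b| + 2) / (r - w) ≤ (Nat.ceil ((3 * |b| + 2) / (r - w)) : ℝ) := Nat.le_ceil _
    _ ≤ (n : ℝ) := by exact_mod_cast le_trans (Nat.le_add_right _ 1) hn
  have hnb' : 3 * |b| + 2 ≤ (r - w) * n := by
    rw [div_le_iff₀ (by linarith)] at hnb; linarith [hnb]
  have hcn : (0 : ℝ) < c + n := by positivity
  have hrec := dd_succ b (by linarith : (0:ℝ) < c) n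
  have habs : |dd b c (n + 1)| * (c + n) = |dd b c n| * |b + n| := by
    have := congrArg abs hrec
    rwa [abs_mul, abs_mul, abs_of_pos hcn] at this
  have key : ((n : ℝ) + 1 + 1) * |b + n| * w ≤ r * ((n : ℝ) + 1) * (c + n) := by
    have hb : |b + (n:ℝ)| ≤ |b| + n := by
      calc |b + (n:ℝ)| ≤ |b| + |(n:ℝ)| := abs_add_le _ _
        _ = |b| + n := by rw [Nat.abs_cast]
    have h1n : (1:ℝ) ≤ (n:ℝ) := by exact_mod_cast hn1
    have hw1 : w ≤ 1 := hw.le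
    have hn0 : (0:ℝ) ≤ (n:ℝ) := by positivity
    have hA : (0:ℝ) ≤ ((r - w) * n - (3 * |b| + 2)) * n := mul_nonneg (by linarith) hn0
    have hB : (0:ℝ) ≤ (|b| - w * |b|) * n :=
      mul_nonneg (by nlinarith [abs_nonneg b]) hn0
    have hC : (0:ℝ) ≤ ((n:ℝ) - 1) * |b| := mul_nonneg (by linarith) (abs_nonneg b)
    have hD : (0:ℝ) ≤ (r - w) * n := mul_nonneg (by linarith) hn0
    have step : ((n : ℝ) + 1 + 1) * (|b| + n) * w ≤ r * ((n : ℝ) + 1) * (1 + n) := by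
      nlinarith [abs_nonneg b]
    have s2 : ((n : ℝ) + 1 + 1) * |b + n| * w ≤ ((n : ℝ) + 1 + 1) * (|b| + n) * w := by
      have := mul_le_mul_of_nonneg_right
        (mul_le_mul_of_nonneg_left hb (by linarith : (0:ℝ) ≤ (n:ℝ)+1+1)) hw0
      linarith
    have s3 : r * ((n : ℝ) + 1) * (1 + n) ≤ r * ((n : ℝ) + 1) * (c + n) := by
      exact mul_le_mul_of_nonneg_left (by linarith) (by positivity)
    linarith
  have hpos : (0:ℝ) ≤ |dd b c n| * w ^ n := by positivity
  have hmain : (((n : ℝ) + 1 + 1) * |dd b c (n+1)| * w ^ (n+1)) * (c + n)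
      ≤ (r * (((n : ℝ) + 1) * |dd b c n| * w ^ n)) * (c + n) := by
    have e1 : (((n : ℝ) + 1 + 1) * |dd b c (n+1)| * w ^ (n+1)) * (c + n)
        = (|dd b c (n+1)| * (c + n)) * (((n : ℝ) + 1 + 1) * w ^ n * w) := by ring
    rw [e1, habs]
    calc (|dd b c n| * |b + n|) * (((n : ℝ) + 1 + 1) * w ^ n * w)
        = (((n : ℝ) + 1 + 1) * |b + n| * w) * (|dd b c n| * w ^ n) := by ring
      _ ≤ (r * ((n : ℝ) + 1) * (c + n)) * (|dd b c n| * w ^ n) :=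
          mul_le_mul_of_nonneg_right key hpos
      _ = (r * (((n : ℝ) + 1) * |dd b c n| * w ^ n)) * (c + n) := by ring
  have hfin : ((n : ℝ) + 1 + 1) * |dd b c (n+1)| * w ^ (n+1)
      ≤ r * (((n : ℝ) + 1) * |dd b c n| * w ^ n) :=
    le_of_mul_le_mul_right hmain hcn
  calc ‖(((n + 1 : ℕ) : ℝ) + 1) * |dd b c (n+1)| * w ^ (n+1)‖
      = ((n : ℝ) + 1 + 1) * |dd b c (n+1)| * w ^ (n+1) := by
        rw [Real.norm_eq_abs, abs_of_nonneg (by positivity)]; push_cast; ring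
    _ ≤ r * (((n : ℝ) + 1) * |dd b c n| * w ^ n) := hfin
    _ = r * ‖((n : ℝ) + 1) * |dd b c n| * w ^ n‖ := by
        rw [Real.norm_eq_abs,
          abs_of_nonneg (show (0:ℝ) ≤ ((n : ℝ) + 1) * |dd b c n| * w ^ n by positivity)]

lemma summable_dd {b c : ℝ} (hc : 1 < c) {z : ℝ} (hz : |z| < 1) :
    Summable (fun n : ℕ => dd b c n * z ^ n) := by
  refine Summable.of_norm_bounded (summable_master b hc (abs_nonneg z) hz) fun n => ?_
  rw [norm_mul, Real.norm_eq_abs, Real.norm_eq_abs, abs_pow]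
  have h0 : (0:ℝ) ≤ (n:ℝ) * (|dd b c n| * |z| ^ n) :=
    mul_nonneg (Nat.cast_nonneg n) (mul_nonneg (abs_nonneg _) (pow_nonneg (abs_nonneg z) n))
  nlinarith [h0]

lemma summable_ndd {b c : ℝ} (hc : 1 < c) {z : ℝ} (hz : |z| < 1) :
    Summable (fun n : ℕ => (n : ℝ) * dd b c n * z ^ n) := by
  refine Summable.of_norm_bounded (summable_master b hc (abs_nonneg z) hz) fun n => ?_
  rw [norm_mul, norm_mul, Real.norm_eq_abs, Real.norm_eq_abs, Real.norm_eq_abs, abs_pow]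
  rw [abs_of_nonneg (Nat.cast_nonneg n)]
  have h0 : (0:ℝ) ≤ |dd b c n| * |z| ^ n :=
    mul_nonneg (abs_nonneg _) (pow_nonneg (abs_nonneg z) n)
  nlinarith [h0]

lemma hasDerivAt_S (b : ℝ) {c : ℝ} (hc : 1 < c) {z : ℝ} (hz : |z| < 1) :
    HasDerivAt (fun y : ℝ => ∑' n : ℕ, dd b c n * y ^ n)
      (∑' n : ℕ, dd b c n * ((n : ℝ) * z ^ (n - 1))) z := by
  set r : ℝ := (1 + |z|) / 2 with hr
  have hz0 := abs_nonneg z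
  have hr1 : r < 1 := by rw [hr]; linarith
  have hzr : |z| < r := by rw [hr]; linarith
  have hr0 : (0:ℝ) < r := by rw [hr]; linarith
  have hrhalf : (1:ℝ) ≤ 2 * r := by rw [hr]; linarith
  have hu : Summable (fun n : ℕ => |dd b c n| * ((n:ℝ) * r ^ (n-1))) := by
    refine Summable.of_norm_bounded
      ((summable_master b hc (le_of_lt hr0) hr1).mul_left 2) fun n => ?_
    rw [Real.norm_eq_abs,
      abs_of_nonneg (by positivity : (0:ℝ) ≤ |dd b c n| * ((n:ℝ) * r ^ (n-1)))]
    cases n with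
    | zero => simp
    | succ m =>
      have h1 : ((m+1 : ℕ) : ℝ) * r ^ ((m+1) - 1) ≤ 2 * (((m+1 : ℕ) : ℝ) + 1) * r ^ (m+1) := by
        have hpow : r ^ ((m+1) - 1) = r ^ m := by norm_num
        rw [hpow, pow_succ]
        have hrm : (0:ℝ) ≤ r ^ m := by positivity
        have : ((m+1 : ℕ) : ℝ) ≤ 2 * (((m+1 : ℕ) : ℝ) + 1) * r := by
          push_cast
          nlinarith [Nat.cast_nonneg (α := ℝ) m]
        nlinarith [hrm]
      calc |dd b c (m+1)| * (((m+1 : ℕ) : ℝ) * r ^ ((m+1) - 1))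
          ≤ |dd b c (m+1)| * (2 * (((m+1 : ℕ) : ℝ) + 1) * r ^ (m+1)) :=
            mul_le_mul_of_nonneg_left h1 (abs_nonneg _)
        _ = 2 * ((((m+1 : ℕ) : ℝ) + 1) * |dd b c (m+1)| * r ^ (m+1)) := by ring
  have hmem : ∀ y : ℝ, y ∈ Metric.ball (0:ℝ) r → |y| < r := by
    intro y hy; rwa [Metric.mem_ball, Real.dist_eq, sub_zero] at hy
  refine hasDerivAt_tsum_of_isPreconnected hu Metric.isOpen_ball
    (convex_ball _ _).isPreconnected
    (fun n y _ => (hasDerivAt_pow n y).const_mul (dd b c n))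
    (fun n y hy => ?_) (Metric.mem_ball.2 (by rwa [Real.dist_eq, sub_zero]))
    (summable_dd hc hz) (Metric.mem_ball.2 (by rwa [Real.dist_eq, sub_zero]))
  have hy' := hmem y hy
  rw [Real.norm_eq_abs, abs_mul, abs_mul, abs_pow, Nat.abs_cast]
  have hpow : |y| ^ (n-1) ≤ r ^ (n-1) := pow_le_pow_left₀ (abs_nonneg y) hy'.le _
  have := mul_le_mul_of_nonneg_left hpow (Nat.cast_nonneg (α := ℝ) n)
  exact mul_le_mul_of_nonneg_left this (abs_nonneg _)

lemma star (σ β z : ℝ) (hβ1 : β < 1) (hz : |z| < 1) :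
    z * (1 - z) * (∑' n : ℕ, dd (1 - 1/σ) (2 - β) n * ((n:ℝ) * z ^ (n - 1)))
      + (1 - β) * (1 - z) * (∑' n : ℕ, dd (1 - 1/σ) (2 - β) n * z ^ n)
      - (β - 1/σ) * z * (∑' n : ℕ, dd (1 - 1/σ) (2 - β) n * z ^ n) = 1 - β := by
  have hc : (1:ℝ) < 2 - β := by linarith
  have hc0 : (0:ℝ) < 2 - β := by linarith
  set f : ℕ → ℝ := fun n => dd (1 - 1/σ) (2 - β) n * z ^ n with hfdef
  set g : ℕ → ℝ := fun n => (n : ℝ) * dd (1 - 1/σ) (2 - β) n * z ^ n with hgdef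
  have hf : Summable f := summable_dd hc hz
  have hg : Summable g := summable_ndd hc hz
  set E : ℕ → ℝ := fun n => g n + (1 - β) * f n with hEdef
  set F : ℕ → ℝ := fun n => g n + ((1 - β) + (β - 1/σ)) * f n with hFdef
  have hE : Summable E := hg.add (hf.mul_left _)
  set S : ℝ := ∑' n, f n with hS
  set T1 : ℝ := ∑' n, g n with hT1
  set S' : ℝ := ∑' n : ℕ, dd (1 - 1/σ) (2 - β) n * ((n:ℝ) * z ^ (n - 1)) with hS'
  -- id1 : z * S' = T1
  have id1 : z * S' = T1 := by
    rw [hS', hT1, ← tsum_mul_left]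
    refine tsum_congr fun n => ?_
    cases n with
    | zero => simp [hgdef]
    | succ m =>
      simp only [hgdef]
      have : z ^ (m + 1) = z ^ m * z := pow_succ z m
      have h2 : (m + 1 : ℕ) - 1 = m := by norm_num
      rw [h2]
      push_cast
      ring
  have id2 : (∑' n, E n) = T1 + (1 - β) * S := by
    rw [hEdef, Summable.tsum_add hg (hf.mul_left _), tsum_mul_left]
  have id3 : ∀ n : ℕ, z * F n = E (n + 1) := by
    intro n
    have hrec := dd_succ (1 - 1/σ) hc0 n
    simp only [hFdef, hEdef, hgdef, hfdef]
    push_cast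
    linear_combination (-(z ^ n * z)) * hrec
  have id4 : (∑' n, E n) = E 0 + ∑' n, E (n + 1) := Summable.tsum_eq_zero_add hE
  have e4 : E 0 = 1 - β := by simp [hEdef, hgdef, hfdef, dd_zero]
  have id5 : z * (∑' n, F n) = (∑' n, E n) - (1 - β) := by
    rw [← tsum_mul_left, tsum_congr id3]
    rw [id4, e4]; ring
  have id6 : (∑' n, F n) = T1 + ((1 - β) + (β - 1/σ)) * S := by
    rw [hFdef, Summable.tsum_add hg (hf.mul_left _), tsum_mul_left]
  have hthis := id5
  rw [id6, id2] at hthis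
  linear_combination (1 - z) * id1 - hthis

end LFRRA

open LFRRA in
/-- The LFRRA utility in hypergeometric-series form has marginal
utility `K·(1+ασq)^(β−1/σ)·q^(−β)` at any `q > 0` with `|ασq| < 1`. -/
theorem lfrra_utility_hasDerivAt
    (α σ β K C q : ℝ) (hσ0 : σ ≠ 0) (hσ1 : σ ≠ 1) (hβ : β ∈ Set.Ioo (0:ℝ) 1)
    (hK : 0 < K) (hq : 0 < q) (habs : |α * σ * q| < 1) :
    HasDerivAt (fun x : ℝ =>
        (K * σ / (σ - 1)) * (1 + α * σ * x) ^ (β - 1/σ) * x ^ (1 - β) *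
          (1 + ((β - 1/σ) / (1 - β)) *
            ∑' (n : ℕ), ((ascPochhammer ℝ n).eval (1 - 1/σ) * (ascPochhammer ℝ n).eval 1 /
              (ascPochhammer ℝ n).eval (2 - β)) * (-(α * σ * x)) ^ n / (Nat.factorial n : ℝ)) + C)
      (K * (1 + α * σ * q) ^ (β - 1/σ) * q ^ (-β)) q := by
  obtain ⟨hβ0, hβ1⟩ := hβ
  have hβ' : (1:ℝ) - β ≠ 0 := by linarith
  have hσ1' : σ - 1 ≠ 0 := sub_ne_zero.2 hσ1
  have hc : (1:ℝ) < 2 - β := by linarith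
  have hc0 : (0:ℝ) < 2 - β := by linarith
  have habs' : |(-(α * σ * q))| < 1 := by rwa [abs_neg]
  have h1t : 0 < 1 + α * σ * q := by
    have h := abs_lt.1 habs; linarith [h.1]
  have hq' : q ≠ 0 := hq.ne'
  have htsum : ∀ x : ℝ,
      (∑' (n : ℕ), ((ascPochhammer ℝ n).eval (1 - 1/σ) * (ascPochhammer ℝ n).eval 1 /
          (ascPochhammer ℝ n).eval (2 - β)) * (-(α * σ * x)) ^ n / (Nat.factorial n : ℝ))
      = ∑' (n : ℕ), dd (1 - 1/σ) (2 - β) n * (-(α * σ * x)) ^ n := by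
    intro x
    refine tsum_congr fun n => ?_
    have hfac : ((Nat.factorial n : ℝ)) ≠ 0 := Nat.cast_ne_zero.2 (Nat.factorial_ne_zero n)
    have hcpos := poch_pos hc0 n
    rw [ascPochhammer_eval_one]
    unfold dd
    field_simp
  simp only [htsum]
  -- derivatives
  have hlin : HasDerivAt (fun x : ℝ => -(α * σ * x)) (-(α * σ)) q := by
    have h := ((hasDerivAt_id q).const_mul (α * σ)).neg
    simp only [mul_one] at h
    exact h
  have hSd := hasDerivAt_S (1 - 1/σ) hc habs'
  have hT : HasDerivAt (fun x : ℝ => ∑' n : ℕ, dd (1 - 1/σ) (2 - β) n * (-(α * σ * x)) ^ n)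
      ((∑' n : ℕ, dd (1 - 1/σ) (2 - β) n * ((n:ℝ) * (-(α * σ * q)) ^ (n - 1))) * -(α * σ)) q := by
    have h := hSd.comp q hlin
    simpa [Function.comp_def] using h
  have hP : HasDerivAt (fun x : ℝ => (1 + α * σ * x) ^ (β - 1/σ))
      (α * σ * (β - 1/σ) * (1 + α * σ * q) ^ (β - 1/σ - 1)) q := by
    have hin : HasDerivAt (fun x : ℝ => 1 + α * σ * x) (α * σ) q := by
      simpa using ((hasDerivAt_id q).const_mul (α * σ)).const_add 1
    exact hin.rpow_const (Or.inl h1t.ne')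
  have hQ : HasDerivAt (fun x : ℝ => x ^ (1 - β)) ((1 - β) * q ^ (1 - β - 1)) q :=
    Real.hasDerivAt_rpow_const (Or.inl hq')
  have hG : HasDerivAt (fun x : ℝ =>
        1 + ((β - 1/σ) / (1 - β)) * (∑' n : ℕ, dd (1 - 1/σ) (2 - β) n * (-(α * σ * x)) ^ n))
      (((β - 1/σ) / (1 - β)) *
        ((∑' n : ℕ, dd (1 - 1/σ) (2 - β) n * ((n:ℝ) * (-(α * σ * q)) ^ (n - 1))) * -(α * σ))) q :=
    (hT.const_mul _).const_add 1
  have hD := (((hP.const_mul (K * σ / (σ - 1))).mul hQ).mul hG).add_const C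
  refine hD.congr_deriv ?_
  symm
  simp only [Pi.mul_apply]
  set X : ℝ := (1 + α * σ * q) ^ (β - 1/σ - 1) with hX
  set Y : ℝ := q ^ (-β) with hY
  set S : ℝ := ∑' n : ℕ, dd (1 - 1/σ) (2 - β) n * (-(α * σ * q)) ^ n with hSdef
  set S' : ℝ := ∑' n : ℕ, dd (1 - 1/σ) (2 - β) n * ((n:ℝ) * (-(α * σ * q)) ^ (n - 1)) with hS'def
  have hstar := star σ β (-(α * σ * q)) hβ1 habs'
  rw [← hSdef, ← hS'def] at hstar
  have e1 : (1 + α * σ * q) ^ (β - 1/σ) = X * (1 + α * σ * q) := by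
    have h := Real.rpow_add h1t (β - 1/σ - 1) 1
    rw [Real.rpow_one] at h
    rw [hX, ← h]
    congr 1
    ring
  have e2 : q ^ (1 - β) = Y * q := by
    have h := Real.rpow_add hq (-β) 1
    rw [Real.rpow_one] at h
    rw [hY, ← h]
    congr 1
    ring
  have e3 : q ^ (1 - β - 1) = Y := by
    rw [hY]
    congr 1
    ring
  rw [e1, e2, e3]
  have hm : ((β - 1/σ) / (1 - β)) * (1 - β) = β - 1/σ := div_mul_cancel₀ _ hβ'
  have hkey : (β - 1/σ) * (α * σ * q) * (1 + ((β - 1/σ)/(1 - β)) * S)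
      + (1 - β) * (1 + α * σ * q) * (1 + ((β - 1/σ)/(1 - β)) * S)
      - ((β - 1/σ)/(1 - β)) * (α * σ * q) * (1 + α * σ * q) * S'
      = (1 + α * σ * q) * (1 - 1/σ) := by
    linear_combination ((β - 1/σ)/(1 - β)) * hstar + hm
  have hσa : σ * (1/σ) = 1 := by field_simp
  have hσb : (σ - 1) * (1/(σ - 1)) = 1 := by field_simp
  linear_combination (-(K*σ/(σ-1)) * X * Y) * hkey
    + K * X * Y * (1 + α*σ*q) * (1/(σ-1)) * hσa
    - K * X * Y * (1 + α*σ*q) * hσb
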